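/- Let A be an abelian normal subgroup of a finite group G such that G = ⟨x⟩A for some x ∈ G. Then the map A → G' given by a ↦ [x,a] is a group homomorphism onto the commutator subgroup G' with kernel C_A(x); in particular |G'| = |A : C_A(x)|. -/

import Mathlib

open Pointwise in
private lemma stmt0_decomp {G : Type*} [Group G] (A : Subgroup G) [A.Normal]
    (x : G) (hgen : Subgroup.zpowers x ⊔ A = ⊤) (g : G) :
    ∃ n : ℤ, ∃ a ∈ A, g = x ^ n * a := by
  have hg : g ∈ (↑(Subgroup.zpowers x ⊔ A) : Set G) := by
    rw [hgen]; trivial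
  rw [Subgroup.mul_normal] at hg
  obtain ⟨y, hy, a, ha, rfl⟩ := hg
  obtain ⟨n, rfl⟩ := hy
  exact ⟨n, a, ha, rfl⟩

private lemma stmt0_aux {G : Type*} [Group G] (x a b : G)
    (h : a⁻¹ * (x * b * x⁻¹ * b⁻¹) = x * b * x⁻¹ * b⁻¹ * a⁻¹) :
    x * (a * b) * x⁻¹ * (a * b)⁻¹ = (x * a * x⁻¹ * a⁻¹) * (x * b * x⁻¹ * b⁻¹) := by
  calc x * (a * b) * x⁻¹ * (a * b)⁻¹
      = x * a * x⁻¹ * ((x * b * x⁻¹ * b⁻¹) * a⁻¹) := by group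
    _ = x * a * x⁻¹ * (a⁻¹ * (x * b * x⁻¹ * b⁻¹)) := by rw [h]
    _ = (x * a * x⁻¹ * a⁻¹) * (x * b * x⁻¹ * b⁻¹) := by group

/-- Let `A` be an abelian normal subgroup of a finite group `G` with `G = ⟨x⟩A`.
Then `a ↦ [x,a]` is a homomorphism from `A` onto the commutator subgroup `G'`
with kernel `C_A(x)`; in particular `|G'| = |A : C_A(x)|`. -/
theorem stmt0 (G : Type*) [Group G] [Finite G] (A : Subgroup G) [A.Normal]
    (hA : ∀ a b : G, a ∈ A → b ∈ A → a * b = b * a)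
    (x : G) (hgen : Subgroup.zpowers x ⊔ A = ⊤) :
    ∃ f : A →* G,
      (∀ a : A, f a = x * a * x⁻¹ * (a : G)⁻¹) ∧
      f.range = commutator G ∧
      (∀ a : A, f a = 1 ↔ x * a = a * x) ∧
      Nat.card (commutator G) * Nat.card {a : A // x * a = a * x} = Nat.card A := by
  classical
  have hN : A.Normal := ‹A.Normal›
  have hmem : ∀ a : A, x * (a : G) * x⁻¹ * (a : G)⁻¹ ∈ A := fun a =>
    A.mul_mem (hN.conj_mem a a.2 x) (A.inv_mem a.2)
  -- the homomorphism
  let f : A →* G :=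
  { toFun := fun a => x * (a : G) * x⁻¹ * (a : G)⁻¹
    map_one' := by simp
    map_mul' := by
      intro a b
      have h := hA ((a : G))⁻¹ (x * (b : G) * x⁻¹ * (b : G)⁻¹) (A.inv_mem a.2) (hmem b)
      exact stmt0_aux x (a : G) (b : G) h }
  have hf : ∀ a : A, f a = x * (a : G) * x⁻¹ * (a : G)⁻¹ := fun a => rfl
  have hfA : ∀ a : A, f a ∈ A := hmem
  -- conjugation by powers of x preserves the range
  have hconjx : ∀ n : ℤ, ∀ c : A, x ^ n * f c * (x ^ n)⁻¹ ∈ f.range := by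
    intro n
    induction n using Int.induction_on with
    | zero => intro c; simp only [zpow_zero, one_mul, inv_one, mul_one]; exact ⟨c, rfl⟩
    | succ n ih =>
        intro c
        have hc' : x * (c : G) * x⁻¹ ∈ A := hN.conj_mem c c.2 x
        have key : x ^ ((n : ℤ) + 1) * f c * (x ^ ((n : ℤ) + 1))⁻¹
            = x ^ (n : ℤ) * f ⟨x * (c : G) * x⁻¹, hc'⟩ * (x ^ (n : ℤ))⁻¹ := by
          rw [hf, hf]
          show x ^ ((n : ℤ) + 1) * (x * (c : G) * x⁻¹ * (c : G)⁻¹) * (x ^ ((n : ℤ) + 1))⁻¹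
            = x ^ (n : ℤ) * (x * (x * (c : G) * x⁻¹) * x⁻¹ * (x * (c : G) * x⁻¹)⁻¹) * (x ^ (n : ℤ))⁻¹
          group
        rw [key]; exact ih _
    | pred n ih =>
        intro c
        have hc' : x⁻¹ * (c : G) * x ∈ A := by
          simpa using hN.conj_mem c c.2 x⁻¹
        have key : x ^ (-(n : ℤ) - 1) * f c * (x ^ (-(n : ℤ) - 1))⁻¹
            = x ^ (-(n : ℤ)) * f ⟨x⁻¹ * (c : G) * x, hc'⟩ * (x ^ (-(n : ℤ)))⁻¹ := by
          rw [hf, hf]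
          show x ^ (-(n : ℤ) - 1) * (x * (c : G) * x⁻¹ * (c : G)⁻¹) * (x ^ (-(n : ℤ) - 1))⁻¹
            = x ^ (-(n : ℤ)) * (x * (x⁻¹ * (c : G) * x) * x⁻¹ * (x⁻¹ * (c : G) * x)⁻¹) * (x ^ (-(n : ℤ)))⁻¹
          group
        rw [key]; exact ih _
  -- the range is normal
  have hnormal : f.range.Normal := by
    constructor
    rintro _ ⟨c, rfl⟩ g
    obtain ⟨n, a, ha, rfl⟩ := stmt0_decomp A x hgen g
    have hcomm : a * f c * a⁻¹ = f c := by
      rw [hA a (f c) ha (hfA c)]; group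
    have : x ^ n * a * f c * (x ^ n * a)⁻¹ = x ^ n * (a * f c * a⁻¹) * (x ^ n)⁻¹ := by
      group
    rw [this, hcomm]
    exact hconjx n c
  -- range = commutator
  have hrange : f.range = commutator G := by
    apply le_antisymm
    · rintro _ ⟨c, rfl⟩
      rw [hf]
      exact Subgroup.commutator_mem_commutator (Subgroup.mem_top x) (Subgroup.mem_top (c : G))
    · rw [commutator]
      rw [Subgroup.commutator_le]
      intro g hg h hh
      letI := hnormal
      set π := QuotientGroup.mk' f.range with hπ
      have hker : ∀ z : G, π z = 1 ↔ z ∈ f.range := by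
        intro z
        rw [← MonoidHom.mem_ker, QuotientGroup.ker_mk']
      have hxA : ∀ a : G, a ∈ A → Commute (π x) (π a) := by
        intro a ha
        rw [← commutatorElement_eq_one_iff_commute, ← map_commutatorElement, hker]
        exact ⟨⟨a, ha⟩, by rw [hf]; rfl⟩
      obtain ⟨i, a, ha, rfl⟩ := stmt0_decomp A x hgen g
      obtain ⟨j, b, hb, rfl⟩ := stmt0_decomp A x hgen h
      have hcom : Commute (π (x ^ i * a)) (π (x ^ j * b)) := by
        rw [map_mul, map_mul, map_zpow, map_zpow]
        have h1 : Commute ((π x) ^ i) ((π x) ^ j) := (Commute.refl (π x)).zpow_zpow i j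
        have h2 : Commute ((π x) ^ i) (π b) := (hxA b hb).zpow_left i
        have h3 : Commute (π a) ((π x) ^ j) := ((hxA a ha).symm).zpow_right j
        have h4 : Commute (π a) (π b) := by
          unfold Commute SemiconjBy
          rw [← map_mul, ← map_mul, hA a b ha hb]
        exact (h1.mul_right h2).mul_left (h3.mul_right h4)
      open scoped commutatorElement in
      have : π ⁅x ^ i * a, x ^ j * b⁆ = 1 := by
        rw [map_commutatorElement, commutatorElement_eq_one_iff_commute]
        exact hcom
      rw [hker] at this
      exact this
  -- kernel characterization
  have hkerchar : ∀ a : A, f a = 1 ↔ x * (a : G) = (a : G) * x := by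
    intro a
    rw [hf, mul_inv_eq_one, mul_inv_eq_iff_eq_mul]
  -- cardinality
  refine ⟨f, hf, hrange, hkerchar, ?_⟩
  have h1 : Nat.card (A ⧸ f.ker) * Nat.card f.ker = Nat.card A :=
    (Subgroup.card_eq_card_quotient_mul_card_subgroup f.ker).symm
  have h2 : Nat.card (A ⧸ f.ker) = Nat.card f.range :=
    Nat.card_congr (QuotientGroup.quotientKerEquivRange f).toEquiv
  have h3 : Nat.card f.ker = Nat.card {a : A // x * (a : G) = (a : G) * x} :=
    Nat.card_congr (Equiv.subtypeEquivRight fun a => by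
      rw [MonoidHom.mem_ker, hkerchar])
  have h4 : Nat.card (commutator G) = Nat.card f.range := by rw [hrange]
  rw [h4, ← h3, ← h2, h1]
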